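/- For n ≥ 1, F_n(X) = ∑_{0 ≤ m ≤ n/2} (−1)^m · C(n−m, m) · X^{n−2m} + ∑_{0 ≤ m ≤ (n−1)/2} (−1)^m · C(n−m−1, m) · X^{n−2m−1}, where C(a,b) denotes the binomial coefficient. -/
import Mathlib

open Polynomial

noncomputable def TT : ℕ → ℤ[X]
  | 0 => 2
  | 1 => Polynomial.X
  | (k+2) => Polynomial.X * TT (k+1) - TT k

noncomputable def F (n : ℕ) : ℤ[X] := 1 + ∑ k ∈ Finset.Icc 1 n, TT k

noncomputable def fA (n m : ℕ) : ℤ[X] :=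
  Polynomial.C ((-1) ^ m * ((n - m).choose m : ℤ)) * Polynomial.X ^ (n - 2 * m)

noncomputable def A (n : ℕ) : ℤ[X] := ∑ m ∈ Finset.range (n / 2 + 1), fA n m

lemma ext_lemma (n N : ℕ) (h : n / 2 + 1 ≤ N) :
    A n = ∑ m ∈ Finset.range N, fA n m := by
  unfold A
  apply Finset.sum_subset (Finset.range_subset_range.mpr h)
  intro m hm hnot
  simp only [Finset.mem_range] at hm hnot
  have : (n - m).choose m = 0 := Nat.choose_eq_zero_of_lt (by omega)
  simp [fA, this]

lemma key (n m : ℕ) (h : 2 * m ≤ n) :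
    fA (n+2) (m+1) = X * fA (n+1) (m+1) - fA n m := by
  rcases Nat.lt_or_ge (2*m) n with h2 | h2
  · obtain ⟨e, rfl⟩ : ∃ e, n = 2*m+1+e := ⟨n - 2*m - 1, by omega⟩
    simp only [fA,
      show 2*m+1+e+2 - (m+1) = (m+1+e)+1 from by omega,
      show 2*m+1+e+1 - (m+1) = m+1+e from by omega,
      show 2*m+1+e - m = m+1+e from by omega,
      show 2*m+1+e+2 - 2*(m+1) = e+1 from by omega,
      show 2*m+1+e+1 - 2*(m+1) = e from by omega,
      show 2*m+1+e - 2*m = e+1 from by omega,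
      Nat.choose_succ_succ (m+1+e) m]
    push_cast
    simp only [map_add, map_mul, map_pow, map_neg, map_one, map_natCast]
    ring
  · have hn : n = 2*m := by omega
    subst hn
    simp only [fA,
      show 2*m+2 - (m+1) = m+1 from by omega,
      show 2*m+1 - (m+1) = m from by omega,
      show 2*m - m = m from by omega,
      show 2*m+2 - 2*(m+1) = 0 from by omega,
      show 2*m - 2*m = 0 from by omega,
      Nat.choose_self, Nat.choose_succ_self]
    simp only [map_mul, map_pow, map_neg, map_one, map_natCast]
    push_cast
    ring

lemma Arec (n : ℕ) : A (n+2) = X * A (n+1) - A n := by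
  have h1 : A (n+2) = ∑ m ∈ Finset.range (n/2+2), fA (n+2) m :=
    ext_lemma _ _ (by omega)
  have h2 : A (n+1) = ∑ m ∈ Finset.range (n/2+2), fA (n+1) m :=
    ext_lemma _ _ (by omega)
  rw [h1, h2, Finset.sum_range_succ' (fA (n+2)), Finset.sum_range_succ' (fA (n+1))]
  have hc : ∀ m ∈ Finset.range (n/2+1), fA (n+2) (m+1) = X * fA (n+1) (m+1) - fA n m := by
    intro m hm
    exact key n m (by simp only [Finset.mem_range] at hm; omega)
  rw [Finset.sum_congr rfl hc, Finset.sum_sub_distrib, ← Finset.mul_sum]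
  have h0 : fA (n+2) 0 = X * fA (n+1) 0 := by
    simp only [fA, Nat.sub_zero, Nat.choose_zero_right, Nat.mul_zero]
    simp [pow_succ]
    ring
  have hA : A n = ∑ m ∈ Finset.range (n/2+1), fA n m := rfl
  rw [h0, hA]
  ring

lemma A0 : A 0 = 1 := by simp [A, fA]
lemma A1 : A 1 = X := by simp [A, fA]

lemma TT_eq : ∀ k, TT (k+2) = A (k+2) - A k := by
  have H : ∀ k, TT (k+2) = A (k+2) - A k ∧ TT (k+3) = A (k+3) - A (k+1) := by
    intro k
    induction k with
    | zero =>
      constructor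
      · show X * TT 1 - TT 0 = A 2 - A 0
        rw [Arec 0, A0, A1]; show X*X - 2 = X*X - 1 - 1; ring
      · show X * TT 2 - TT 1 = A 3 - A 1
        show X * (X * TT 1 - TT 0) - TT 1 = A 3 - A 1
        rw [Arec 1, Arec 0, A0, A1]
        show X * (X*X - 2) - X = X * (X*X-1) - X - X; ring
    | succ k ih =>
      refine ⟨ih.2, ?_⟩
      show X * TT (k+3) - TT (k+2) = A (k+4) - A (k+2)
      rw [ih.1, ih.2, Arec (k+2), Arec k]
      ring
  exact fun k => (H k).1

lemma F_eq (n : ℕ) (hn : 1 ≤ n) : F n = A n + A (n-1) := by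
  induction n with
  | zero => omega
  | succ n ih =>
    rcases Nat.eq_or_lt_of_le hn with h | h
    · have : n = 0 := by omega
      subst this
      show 1 + ∑ k ∈ Finset.Icc 1 1, TT k = A 1 + A 0
      rw [A0, A1]
      simp [TT]
      ring
    · have hn1 : 1 ≤ n := by omega
      have hF : F (n+1) = F n + TT (n+1) := by
        unfold F
        rw [Finset.sum_Icc_succ_top (by omega : 1 ≤ n+1)]
        ring
      obtain ⟨k, rfl⟩ : ∃ k, n = k + 1 := ⟨n-1, by omega⟩
      rw [hF, ih hn1, TT_eq k]
      simp only [Nat.add_sub_cancel]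
      ring

theorem stmt_7 (n : ℕ) (hn : 1 ≤ n) :
    F n =
      (∑ m ∈ Finset.range (n / 2 + 1),
        Polynomial.C ((-1) ^ m * ((n - m).choose m : ℤ)) * Polynomial.X ^ (n - 2 * m)) +
      (∑ m ∈ Finset.range ((n - 1) / 2 + 1),
        Polynomial.C ((-1) ^ m * ((n - m - 1).choose m : ℤ)) * Polynomial.X ^ (n - 2 * m - 1)) := by
  rw [F_eq n hn]
  congr 1
  unfold A fA
  apply Finset.sum_congr rfl
  intro m _
  have h1 : n - 1 - m = n - m - 1 := by omega
  have h2 : n - 1 - 2 * m = n - 2 * m - 1 := by omega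
  rw [h1, h2]
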